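/- Suppose that sup_{n,i≥1} μ_n/μ_{n+i} < ∞, that λ_n/μ_n → 0 as n → ∞, that λ_n > 0 for all n ≥ 1, and that Σ_{n≥1} 1/μ_n < ∞. Then μ_{n+1}²·M_n → 2 as n → ∞, i.e. M_n is asymptotically equivalent to 2/μ_{n+1}². -/

import Mathlib

open Filter Finset


private lemma tsum_bound (f : ℕ → ℝ) (ε B : ℝ) (hε0 : 0 ≤ ε) (hε1 : ε < 1)
    (h0 : ∀ k, 0 ≤ f k) (hle : ∀ k, f k ≤ ε ^ k * B) :
    f 0 ≤ tsum f ∧ tsum f ≤ f 0 + ε / (1 - ε) * B := by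
  have hB : 0 ≤ B := by have := (h0 0).trans (hle 0); simpa using this
  have hgeom : Summable (fun k : ℕ => ε ^ k * B) :=
    (summable_geometric_of_lt_one hε0 hε1).mul_right B
  have hs : Summable f := Summable.of_nonneg_of_le h0 hle hgeom
  refine ⟨Summable.le_tsum hs 0 fun j _ => h0 j, ?_⟩
  rw [Summable.tsum_eq_zero_add hs]
  have h1 : Summable (fun k => f (k + 1)) := (summable_nat_add_iff 1).mpr hs
  have h2 : Summable (fun k : ℕ => ε ^ (k + 1) * B) := (summable_nat_add_iff 1).mpr hgeom
  have h3 : (∑' k, f (k + 1)) ≤ ∑' k : ℕ, ε ^ (k + 1) * B :=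
    Summable.tsum_le_tsum (fun k => hle (k + 1)) h1 h2
  have h4 : (∑' k : ℕ, ε ^ (k + 1) * B) = ε / (1 - ε) * B := by
    have heq : (fun k : ℕ => ε ^ (k + 1) * B) = fun k : ℕ => ε ^ k * (ε * B) := by
      funext k; ring
    rw [heq, tsum_mul_right, tsum_geometric_of_lt_one hε0 hε1]
    ring
  rw [h4] at h3
  linarith

private lemma e_bound (lam mu : ℕ → ℝ)
    (hlam : ∀ n ≥ 1, 0 < lam n) (hmu : ∀ n ≥ 1, 0 < mu n)
    (C ε : ℝ) (hC1 : 1 ≤ C) (hC : ∀ n ≥ 1, ∀ i ≥ 1, mu n / mu (n + i) ≤ C)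
    (hε0 : 0 < ε) (hε1 : ε < 1) (n : ℕ) (hr : ∀ j ≥ n + 1, lam j / mu j ≤ ε) :
    1 / mu (n + 1) ≤ (∑' k : ℕ, (∏ j ∈ Finset.range k, lam (n + 1 + j)) /
        (∏ j ∈ Finset.range (k + 1), mu (n + 1 + j))) ∧
    (∑' k : ℕ, (∏ j ∈ Finset.range k, lam (n + 1 + j)) /
        (∏ j ∈ Finset.range (k + 1), mu (n + 1 + j)))
      ≤ (1 + C * ε / (1 - ε)) / mu (n + 1) := by
  have hμ : 0 < mu (n + 1) := hmu _ (by omega)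
  have hμk : ∀ k : ℕ, 0 < mu (n + 1 + k) := fun k => hmu _ (by omega)
  set f : ℕ → ℝ := fun k => (∏ j ∈ Finset.range k, lam (n + 1 + j)) /
        (∏ j ∈ Finset.range (k + 1), mu (n + 1 + j)) with hfdef
  have hfk : ∀ k, f k = (∏ j ∈ Finset.range k, lam (n + 1 + j) / mu (n + 1 + j))
      * (1 / mu (n + 1 + k)) := by
    intro k
    rw [hfdef]
    simp only
    rw [Finset.prod_div_distrib, mul_one_div, div_div, ← Finset.prod_range_succ]
  have hq0 : ∀ k, (0:ℝ) ≤ ∏ j ∈ Finset.range k, lam (n + 1 + j) / mu (n + 1 + j) := by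
    intro k
    exact Finset.prod_nonneg fun j _ =>
      le_of_lt (div_pos (hlam _ (by omega)) (hmu _ (by omega)))
  have hqε : ∀ k, (∏ j ∈ Finset.range k, lam (n + 1 + j) / mu (n + 1 + j)) ≤ ε ^ k := by
    intro k
    calc (∏ j ∈ Finset.range k, lam (n + 1 + j) / mu (n + 1 + j))
        ≤ ∏ _j ∈ Finset.range k, ε := by
          refine Finset.prod_le_prod ?_ ?_
          · exact fun j _ => le_of_lt (div_pos (hlam _ (by omega)) (hmu _ (by omega)))
          · exact fun j _ => hr (n + 1 + j) (by omega)
      _ = ε ^ k := by simp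
  have hinv : ∀ k : ℕ, 1 / mu (n + 1 + k) ≤ C * (1 / mu (n + 1)) := by
    intro k
    match k with
    | 0 =>
      simp only [Nat.add_zero]
      have h : (0:ℝ) < 1 / mu (n + 1) := by positivity
      nlinarith
    | (k + 1) =>
      have hCk := hC (n + 1) (by omega) (k + 1) (by omega)
      have p2 : 0 < mu (n + 1 + (k + 1)) := hμk (k + 1)
      rw [div_le_iff₀ p2] at hCk
      rw [mul_one_div, div_le_div_iff₀ p2 hμ]
      linarith
  have h0 : ∀ k, 0 ≤ f k := by
    intro k
    rw [hfk k]
    exact mul_nonneg (hq0 k) (one_div_pos.mpr (hμk k)).le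
  have hle : ∀ k, f k ≤ ε ^ k * (C * (1 / mu (n + 1))) := by
    intro k
    rw [hfk k]
    have hk := hμk k
    exact mul_le_mul (hqε k) (hinv k) (by positivity) (by positivity)
  have hb := tsum_bound f ε (C * (1 / mu (n + 1))) hε0.le hε1 h0 hle
  have hf0 : f 0 = 1 / mu (n + 1) := by
    rw [hfdef]; simp
  rw [hf0] at hb
  have h1ε : 0 < 1 - ε := by linarith
  have heq : 1 / mu (n + 1) + ε / (1 - ε) * (C * (1 / mu (n + 1)))
      = (1 + C * ε / (1 - ε)) / mu (n + 1) := by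
    field_simp
  exact ⟨hb.1, by rw [← heq]; exact hb.2⟩

private lemma arith_bound (C ε s A : ℝ) (hC1 : 1 ≤ C) (hε0 : 0 < ε) (hεhalf : ε ≤ 1/2)
    (hs0 : 0 ≤ s) (hs2 : s ≤ 2 * ε) (hAs : A = 1 + C * s) :
    A ^ 2 + s * (A ^ 2 * C ^ 2) ≤ 1 + 14 * C ^ 4 * ε := by
  have hs1 : s ≤ 1 := by linarith
  have hC2 : 1 ≤ C ^ 2 := by nlinarith
  have hA2 : A ^ 2 ≤ 1 + 3 * C ^ 2 * s := by
    rw [hAs]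
    nlinarith [mul_nonneg hs0 (mul_nonneg (sq_nonneg C) (by linarith : (0:ℝ) ≤ 1 - s)),
      mul_nonneg hs0 (mul_nonneg (by linarith : (0:ℝ) ≤ C) (by linarith : (0:ℝ) ≤ C - 1))]
  have hA4 : A ^ 2 ≤ 4 * C ^ 2 := by
    nlinarith [mul_nonneg (sq_nonneg C) (by linarith : (0:ℝ) ≤ 1 - s)]
  have h1 : s * (A ^ 2 * C ^ 2) ≤ 2 * ε * (4 * C ^ 2 * C ^ 2) := by
    have ha := mul_le_mul_of_nonneg_left (mul_le_mul_of_nonneg_right hA4 (sq_nonneg C)) hs0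
    have hb := mul_le_mul_of_nonneg_right hs2 (by positivity : (0:ℝ) ≤ 4 * C ^ 2 * C ^ 2)
    nlinarith [ha, hb]
  have hx : C ^ 2 * s ≤ 2 * (C ^ 2 * ε) := by
    nlinarith [mul_nonneg (sq_nonneg C) (by linarith : (0:ℝ) ≤ 2 * ε - s)]
  have hy : C ^ 2 * ε ≤ C ^ 4 * ε := by
    nlinarith [mul_nonneg hε0.le (mul_nonneg (sq_nonneg C) (by linarith : (0:ℝ) ≤ C ^ 2 - 1))]
  nlinarith [h1, hA2, hx, hy]

/-- Under `sup_{n,i≥1} μ_n/μ_{n+i} < ∞`, `λ_n/μ_n → 0`, `λ_n > 0` and `Σ 1/μ_n < ∞`, the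
second moment `M n = E_{n+1}(T_n²) = 2 Σ_{i≥n} (∏_{j=n+1}^{i} λ_j/μ_j)·e_i²` satisfies
`μ_{n+1}²·M_n → 2`, i.e. `M_n ~ 2/μ_{n+1}²`. -/
theorem stmt2 (lam mu : ℕ → ℝ)
    (hlam : ∀ n ≥ 1, 0 < lam n) (hmu : ∀ n ≥ 1, 0 < mu n)
    (hsup : ∃ C : ℝ, ∀ n ≥ 1, ∀ i ≥ 1, mu n / mu (n + i) ≤ C)
    (hratio : Tendsto (fun n => lam n / mu n) atTop (nhds 0))
    (hsummu : Summable (fun n : ℕ => 1 / mu (n + 1)))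
    (e M : ℕ → ℝ)
    (he : ∀ n, e n = ∑' k : ℕ,
      (∏ j ∈ Finset.range k, lam (n + 1 + j)) / (∏ j ∈ Finset.range (k + 1), mu (n + 1 + j)))
    (hM : ∀ n ≥ 1, M n = 2 * ∑' k : ℕ,
      (∏ j ∈ Finset.range k, lam (n + 1 + j) / mu (n + 1 + j)) * (e (n + k)) ^ 2) :
    Tendsto (fun n => mu (n + 1) ^ 2 * M n) atTop (nhds 2) := by
  obtain ⟨C₀, hC₀⟩ := hsup
  set C := max C₀ 1 with hCdef
  have hC1 : (1:ℝ) ≤ C := le_max_right _ _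
  have hC : ∀ n ≥ 1, ∀ i ≥ 1, mu n / mu (n + i) ≤ C := fun n hn i hi =>
    (hC₀ n hn i hi).trans (le_max_left _ _)
  have hC0 : (0:ℝ) < C := lt_of_lt_of_le one_pos hC1
  rw [Metric.tendsto_atTop]
  intro δ hδ
  have hCp : (0:ℝ) < 29 * C ^ 4 := by positivity
  set ε := min (1/2 : ℝ) (δ / (29 * C ^ 4)) with hεdef
  have hε0 : 0 < ε := lt_min (by norm_num) (by positivity)
  have hεhalf : ε ≤ 1/2 := min_le_left _ _
  have hε1 : ε < 1 := lt_of_le_of_lt hεhalf (by norm_num)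
  have hεδ : ε ≤ δ / (29 * C ^ 4) := min_le_right _ _
  rw [le_div_iff₀ hCp] at hεδ
  obtain ⟨N₀, hN₀⟩ := (Metric.tendsto_atTop.mp hratio) ε hε0
  refine ⟨N₀ + 1, fun n hn => ?_⟩
  have hn1 : 1 ≤ n := by omega
  have hr : ∀ j ≥ n + 1, lam j / mu j ≤ ε := by
    intro j hj
    have h := hN₀ j (by omega)
    rw [Real.dist_eq, sub_zero] at h
    exact (le_abs_self _).trans h.le
  have h1ε : 0 < 1 - ε := by linarith
  set A := 1 + C * ε / (1 - ε) with hAdef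
  have hA1 : 1 ≤ A := by
    rw [hAdef]
    have : 0 ≤ C * ε / (1 - ε) := by positivity
    linarith
  have hApos : 0 < A := lt_of_lt_of_le one_pos hA1
  have hμ : 0 < mu (n + 1) := hmu _ (by omega)
  have hμk : ∀ k : ℕ, 0 < mu (n + 1 + k) := fun k => hmu _ (by omega)
  -- bounds on e (n + k)
  have hebound : ∀ k : ℕ, 1 / mu (n + k + 1) ≤ e (n + k) ∧ e (n + k) ≤ A / mu (n + k + 1) := by
    intro k
    have hrk : ∀ j ≥ (n + k) + 1, lam j / mu j ≤ ε := fun j hj => hr j (by omega)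
    have hb := e_bound lam mu hlam hmu C ε hC1 hC hε0 hε1 (n + k) hrk
    rw [← he (n + k)] at hb
    exact hb
  have hepos : ∀ k : ℕ, 0 < e (n + k) := fun k =>
    lt_of_lt_of_le (one_div_pos.mpr (hmu _ (by omega))) (hebound k).1
  -- the inverse-mu bound
  have hinv : ∀ k : ℕ, 1 / mu (n + 1 + k) ≤ C * (1 / mu (n + 1)) := by
    intro k
    match k with
    | 0 =>
      simp only [Nat.add_zero]
      have h : (0:ℝ) < 1 / mu (n + 1) := by positivity
      nlinarith
    | (k + 1) =>
      have hCk := hC (n + 1) (by omega) (k + 1) (by omega)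
      have p2 : 0 < mu (n + 1 + (k + 1)) := hμk (k + 1)
      rw [div_le_iff₀ p2] at hCk
      rw [mul_one_div, div_le_div_iff₀ p2 hμ]
      linarith
  -- e (n + k) ≤ A * C / mu (n + 1)
  have heAC : ∀ k : ℕ, e (n + k) ≤ A * C / mu (n + 1) := by
    intro k
    have h1 := (hebound k).2
    have hidx : n + k + 1 = n + 1 + k := by omega
    rw [hidx] at h1
    calc e (n + k) ≤ A / mu (n + 1 + k) := h1
      _ = A * (1 / mu (n + 1 + k)) := by ring
      _ ≤ A * (C * (1 / mu (n + 1))) := by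
          exact mul_le_mul_of_nonneg_left (hinv k) hApos.le
      _ = A * C / mu (n + 1) := by ring
  -- the sum in M
  have hMn := hM n hn1
  set g : ℕ → ℝ := fun k =>
    (∏ j ∈ Finset.range k, lam (n + 1 + j) / mu (n + 1 + j)) * (e (n + k)) ^ 2 with hgdef
  have hq0 : ∀ k, (0:ℝ) ≤ ∏ j ∈ Finset.range k, lam (n + 1 + j) / mu (n + 1 + j) := by
    intro k
    exact Finset.prod_nonneg fun j _ =>
      le_of_lt (div_pos (hlam _ (by omega)) (hmu _ (by omega)))
  have hqε : ∀ k, (∏ j ∈ Finset.range k, lam (n + 1 + j) / mu (n + 1 + j)) ≤ ε ^ k := by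
    intro k
    calc (∏ j ∈ Finset.range k, lam (n + 1 + j) / mu (n + 1 + j))
        ≤ ∏ _j ∈ Finset.range k, ε := by
          refine Finset.prod_le_prod ?_ ?_
          · exact fun j _ => le_of_lt (div_pos (hlam _ (by omega)) (hmu _ (by omega)))
          · exact fun j _ => hr (n + 1 + j) (by omega)
      _ = ε ^ k := by simp
  have hg0 : ∀ k, 0 ≤ g k := by
    intro k
    exact mul_nonneg (hq0 k) (sq_nonneg _)
  have hgle : ∀ k, g k ≤ ε ^ k * (A * C / mu (n + 1)) ^ 2 := by
    intro k
    refine mul_le_mul (hqε k) ?_ (sq_nonneg _) (by positivity)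
    exact pow_le_pow_left₀ (hepos k).le (heAC k) 2
  have hb := tsum_bound g ε ((A * C / mu (n + 1)) ^ 2) hε0.le hε1 hg0 hgle
  have hgval0 : g 0 = (e n) ^ 2 := by
    rw [hgdef]; simp
  rw [hgval0] at hb
  -- M n in terms of tsum g
  rw [Real.dist_eq, hMn]
  have hT1 : (1 / mu (n + 1)) ^ 2 ≤ tsum g := by
    have h1 := (hebound 0).1
    simp only [Nat.add_zero] at h1
    calc (1 / mu (n + 1)) ^ 2 ≤ (e n) ^ 2 := by
          exact pow_le_pow_left₀ (by positivity) h1 2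
      _ ≤ tsum g := hb.1
  have hT2 : tsum g ≤ (A / mu (n + 1)) ^ 2 + ε / (1 - ε) * (A * C / mu (n + 1)) ^ 2 := by
    have h1 := (hebound 0).2
    simp only [Nat.add_zero] at h1
    have h2 : (e n) ^ 2 ≤ (A / mu (n + 1)) ^ 2 :=
      pow_le_pow_left₀ (hepos 0).le h1 2
    linarith [hb.2]
  -- multiply by mu^2
  have key1 : mu (n + 1) ^ 2 * (1 / mu (n + 1)) ^ 2 = 1 := by field_simp
  have key2 : mu (n + 1) ^ 2 * ((A / mu (n + 1)) ^ 2 + ε / (1 - ε) * (A * C / mu (n + 1)) ^ 2)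
      = A ^ 2 + ε / (1 - ε) * (A ^ 2 * C ^ 2) := by field_simp
  have hlow : 1 ≤ mu (n + 1) ^ 2 * tsum g := by
    calc (1:ℝ) = mu (n + 1) ^ 2 * (1 / mu (n + 1)) ^ 2 := key1.symm
      _ ≤ mu (n + 1) ^ 2 * tsum g := by
          exact mul_le_mul_of_nonneg_left hT1 (sq_nonneg _)
  have hup : mu (n + 1) ^ 2 * tsum g ≤ A ^ 2 + ε / (1 - ε) * (A ^ 2 * C ^ 2) := by
    calc mu (n + 1) ^ 2 * tsum g
        ≤ mu (n + 1) ^ 2 * ((A / mu (n + 1)) ^ 2 + ε / (1 - ε) * (A * C / mu (n + 1)) ^ 2) :=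
          mul_le_mul_of_nonneg_left hT2 (sq_nonneg _)
      _ = A ^ 2 + ε / (1 - ε) * (A ^ 2 * C ^ 2) := key2
  -- arithmetic: the upper bound is at most 1 + 14 C^4 ε
  set s := ε / (1 - ε) with hsdef
  have hAs : A = 1 + C * s := by rw [hAdef, hsdef]; ring
  clear_value C ε A s g
  have hs0 : 0 ≤ s := by rw [hsdef]; exact div_nonneg hε0.le h1ε.le
  have hs2 : s ≤ 2 * ε := by
    rw [hsdef, div_le_iff₀ h1ε]
    nlinarith [mul_nonneg hε0.le (by linarith : (0:ℝ) ≤ 1 - 2 * ε)]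
  have hfin : A ^ 2 + s * (A ^ 2 * C ^ 2) ≤ 1 + 14 * C ^ 4 * ε :=
    arith_bound C ε s A hC1 hε0 hεhalf hs0 hs2 hAs
  have hX : mu (n + 1) ^ 2 * tsum g ≤ 1 + 14 * C ^ 4 * ε := le_trans hup hfin
  -- finish
  have hgoal : mu (n + 1) ^ 2 * (2 * tsum g) - 2 = 2 * (mu (n + 1) ^ 2 * tsum g - 1) := by ring
  rw [hgoal, abs_of_nonneg (by linarith)]
  have hCε : 0 < C ^ 4 * ε := by positivity
  have h29 : ε * (29 * C ^ 4) = 29 * (C ^ 4 * ε) := by ring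
  linarith
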